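/- Fix β > 0. Suppose x⁰,…,x^{k-1} and y⁰,…,y^{k-1} are sequences of positive reals (indices mod k, k ≥ 2) satisfying (x^{i+1})²·cosh(β)^4 + (y^{i+1})²·sinh(β)²·cosh(β) = x^i and x^{i+1}·y^{i+1}·sinh(β)·cosh(β)·(1+cosh(β)) = y^i for all i (with x^k = x^0, y^k = y^0). Then this leads to a contradiction; i.e., no such periodic orbit with all y^i > 0 exists. -/
import Mathlib

theorem stmt_5 (β : ℝ) (hβ : 0 < β) (k : ℕ) (hk : 2 ≤ k) (x y : ℕ → ℝ)
    (hx : ∀ i ≤ k, 0 < x i) (hy : ∀ i ≤ k, 0 < y i)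
    (hper_x : x k = x 0) (hper_y : y k = y 0)
    (h1 : ∀ i < k, (x (i+1)) ^ 2 * Real.cosh β ^ 4
        + (y (i+1)) ^ 2 * Real.sinh β ^ 2 * Real.cosh β = x i)
    (h2 : ∀ i < k, x (i+1) * y (i+1) * (Real.sinh β * Real.cosh β * (1 + Real.cosh β)) = y i) :
    False := by
  set c := Real.cosh β with hc_def
  set s := Real.sinh β with hs_def
  have hc : 1 < c := Real.one_lt_cosh.mpr (ne_of_gt hβ)
  have hs : 0 < s := Real.sinh_pos_iff.mpr hβ
  have hs2 : s ^ 2 = c ^ 2 - 1 := Real.sinh_sq β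
  have hc0 : (0:ℝ) < c := by linarith
  -- key1 : squared contraction for x
  have key1 : ∀ i < k, (c ^ 4 * x (i+1)) ^ 2 < c ^ 4 * x i := by
    intro i hi
    have h := h1 i hi
    have hy' := hy (i+1) hi
    nlinarith [pow_pos hc0 4, pow_pos hc0 8, mul_pos hy' hy', mul_pos hs hs,
      mul_pos (mul_pos (mul_pos hy' hy') (mul_pos hs hs)) hc0]
  have A : ∀ i, i ≤ k → 1 ≤ c ^ 4 * x i →
      c ^ 4 * x i ≤ c ^ 4 * x 0 ∧ (0 < i → c ^ 4 * x i < c ^ 4 * x 0) := by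
    intro i
    induction i with
    | zero => exact fun _ _ => ⟨le_refl _, by omega⟩
    | succ n ih =>
      intro hle hone
      have hn : n < k := hle
      have hk1 := key1 n hn
      have h2' : 1 ≤ c ^ 4 * x n := by nlinarith
      have hun : c ^ 4 * x (n+1) < c ^ 4 * x n := by nlinarith
      obtain ⟨hA, _⟩ := ih (Nat.le_of_lt hn) h2'
      exact ⟨le_of_lt (lt_of_lt_of_le hun hA), fun _ => lt_of_lt_of_le hun hA⟩
  have h0 : c ^ 4 * x 0 < 1 := by
    by_contra h
    push_neg at h
    have hk0 : 1 ≤ c ^ 4 * x k := by rw [hper_x]; exact h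
    obtain ⟨_, hs'⟩ := A k (le_refl k) hk0
    rw [hper_x] at hs'
    exact lt_irrefl _ (hs' (by omega))
  have hxlt : ∀ i ≤ k, c ^ 4 * x i < 1 := by
    intro i hi
    by_contra h
    push_neg at h
    obtain ⟨hA, _⟩ := A i hi h
    linarith
  -- q bound : s*(1+c) < c^3
  have hq : s * (1 + c) < c ^ 3 := by
    nlinarith [sq_nonneg (c ^ 3 - s * (1 + c)), sq_nonneg (c - 1), sq_nonneg s,
      mul_pos hs hc0, sq_nonneg (c^2 - 1), sq_nonneg (c^2 - c - 1)]
  -- step for y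
  have key2 : ∀ i < k, y i * c ^ 3 < y (i+1) * (s * (1 + c)) := by
    intro i hi
    have h := h2 i hi
    have hyi := hy (i+1) hi
    have hxi := hxlt (i+1) hi
    have hpos : 0 < y (i+1) * (s * (1 + c)) := by positivity
    calc y i * c ^ 3 = (c ^ 4 * x (i+1)) * (y (i+1) * (s * (1 + c))) := by
          rw [← h]; ring
      _ < 1 * (y (i+1) * (s * (1 + c))) := by
          exact mul_lt_mul_of_pos_right hxi hpos
      _ = y (i+1) * (s * (1 + c)) := one_mul _
  have B : ∀ i ≤ k, y 0 * (c ^ 3) ^ i ≤ y i * (s * (1 + c)) ^ i := by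
    intro i
    induction i with
    | zero => simp
    | succ n ih =>
      intro hle
      have hn : n < k := hle
      have hB := ih (Nat.le_of_lt hn)
      have hk2 := key2 n hn
      have hp1 : (0:ℝ) ≤ (s * (1 + c)) ^ n := by positivity
      have hp2 : (0:ℝ) < (c ^ 3) ^ n := by positivity
      calc y 0 * (c ^ 3) ^ (n+1) = (y 0 * (c ^ 3) ^ n) * c ^ 3 := by ring
        _ ≤ (y n * (s * (1 + c)) ^ n) * c ^ 3 := by nlinarith [pow_pos hc0 3]
        _ = (y n * c ^ 3) * (s * (1 + c)) ^ n := by ring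
        _ ≤ (y (n+1) * (s * (1 + c))) * (s * (1 + c)) ^ n := by nlinarith
        _ = y (n+1) * (s * (1 + c)) ^ (n+1) := by ring
  have hBk := B k (le_refl k)
  rw [hper_y] at hBk
  have hy0 : 0 < y 0 := hy 0 (by omega)
  have hpow : (s * (1 + c)) ^ k < (c ^ 3) ^ k :=
    pow_lt_pow_left₀ hq (by positivity) (by omega)
  nlinarith [mul_lt_mul_of_pos_left hpow hy0]
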